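/- Let X be a measurable space and μ₁, μ₂ probability measures on X such that dp(0,δ)(Eq)(μ₁, μ₂) holds, where Eq = {(x, y) ∈ X × X | x = y}. Then for every measurable set S ⊆ X, both μ₁ S ≤ μ₂ S + δ and μ₂ S ≤ μ₁ S + δ hold; that is, the statistical distance between μ₁ and μ₂ is at most δ. (This is the stated interpretation of derivable relational judgments with postcondition equality and grading δ in the higher-order probabilistic relational logic.) -/

import Mathlib

open MeasureTheory ENNReal
open scoped Classical

/-- The `(ε,δ)`-closeness condition on distributions over `Bool`:
`ν₁ {false} ≤ exp ε · ν₂ {false} + δ`. -/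
def Scond (ε δ : NNReal) (ν₁ ν₂ : Measure Bool) : Prop :=
  ν₁ {false} ≤ ENNReal.ofReal (Real.exp ε) * ν₂ {false} + δ

/-- The graded relational lifting for differential privacy. -/
def dp {X Y : Type*} [MeasurableSpace X] [MeasurableSpace Y]
    (ε δ : NNReal) (R : Set (X × Y)) (μ₁ : Measure X) (μ₂ : Measure Y) : Prop :=
  ∀ (ε' δ' : NNReal) (f : X → Measure Bool) (g : Y → Measure Bool),
    Measurable f → Measurable g →
    (∀ x, IsProbabilityMeasure (f x)) → (∀ y, IsProbabilityMeasure (g y)) →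
    (∀ x y, (x, y) ∈ R → Scond ε' δ' (f x) (g y)) →
    Scond (ε + ε') (δ + δ') (μ₁.bind f) (μ₂.bind g)

lemma bind_ind {X : Type*} [MeasurableSpace X] (μ : Measure X) (S : Set X)
    (hS : MeasurableSet S) :
    (μ.bind (fun x => if x ∈ S then Measure.dirac false else Measure.dirac true)) {false}
      = μ S := by
  have hf : Measurable (fun x => if x ∈ S then Measure.dirac false else Measure.dirac true :
      X → Measure Bool) := Measurable.ite hS measurable_const measurable_const
  rw [Measure.bind_apply (by simp) hf.aemeasurable]
  have : ∀ x, (if x ∈ S then Measure.dirac false else Measure.dirac true) {false}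
      = S.indicator (fun _ => (1 : ENNReal)) x := by
    intro x
    by_cases hx : x ∈ S <;> simp [hx]
  simp_rw [this]
  rw [lintegral_indicator hS]
  simp

lemma dp_ineq {X : Type*} [MeasurableSpace X] (δ : NNReal)
    (μ₁ μ₂ : Measure X)
    (h : dp 0 δ {p : X × X | p.1 = p.2} μ₁ μ₂)
    (S : Set X) (hS : MeasurableSet S) : μ₁ S ≤ μ₂ S + δ := by
  set f : X → Measure Bool := fun x => if x ∈ S then Measure.dirac false else Measure.dirac true
  have hf : Measurable f := Measurable.ite hS measurable_const measurable_const
  have hp : ∀ x, IsProbabilityMeasure (f x) := by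
    intro x; by_cases hx : x ∈ S <;> simp [f, hx] <;> infer_instance
  have := h 0 0 f f hf hf hp hp (by
    intro x y hxy
    simp only [Set.mem_setOf_eq] at hxy
    subst hxy
    unfold Scond
    simp)
  unfold Scond at this
  rw [bind_ind μ₁ S hS, bind_ind μ₂ S hS] at this
  simpa using this

/-- The lifting at the equality relation with grading (0, δ) entails that the statistical
distance between the two measures is at most δ. -/
theorem dp_zero_eq_statistical_distance {X : Type*} [MeasurableSpace X] (δ : NNReal)
    (μ₁ μ₂ : Measure X) [IsProbabilityMeasure μ₁] [IsProbabilityMeasure μ₂]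
    (h : dp 0 δ {p : X × X | p.1 = p.2} μ₁ μ₂)
    (S : Set X) (hS : MeasurableSet S) :
    μ₁ S ≤ μ₂ S + δ ∧ μ₂ S ≤ μ₁ S + δ := by
  refine ⟨dp_ineq δ μ₁ μ₂ h S hS, ?_⟩
  have hc := dp_ineq δ μ₁ μ₂ h Sᶜ hS.compl
  rw [prob_compl_eq_one_sub hS, prob_compl_eq_one_sub hS] at hc
  have h1 : μ₁ S ≤ 1 := prob_le_one
  have h2 : μ₂ S ≤ 1 := prob_le_one
  have hfin : μ₂ S ≠ ⊤ := (lt_of_le_of_lt h2 one_lt_top).ne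
  -- 1 - μ₁ S ≤ 1 - μ₂ S + δ  →  μ₂ S ≤ μ₁ S + δ
  have := tsub_le_iff_right.mp hc
  -- 1 ≤ 1 - μ₂ S + δ + μ₁ S
  have h3 : μ₂ S + 1 ≤ μ₂ S + (1 - μ₂ S + ↑δ + μ₁ S) := add_le_add_right this _
  have h4 : μ₂ S + (1 - μ₂ S + ↑δ + μ₁ S) = 1 + (μ₁ S + ↑δ) := by
    rw [show μ₂ S + (1 - μ₂ S + ↑δ + μ₁ S) = (μ₂ S + (1 - μ₂ S)) + (↑δ + μ₁ S) by ring,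
      add_tsub_cancel_of_le h2]
    ring
  rw [h4, add_comm (μ₂ S) 1] at h3
  exact (ENNReal.add_le_add_iff_left one_ne_top).mp h3
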